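/- Product update with the action model E1 computes the inflating update rule: for any threshold model M = (A, N, B, θ), the product model M ⊗ E1 is isomorphic (as a threshold model, i.e., preserving network and behavior set) to (A, N, B⁺, θ) where B⁺ = B ∪ {a : |N(a) ∩ B|/|N(a)| ≥ θ}. -/
import Mathlib


open Finset
open scoped Classical

variable {α : Type*}

noncomputable def nbhd [Fintype α] (N : α → α → Prop) (a : α) : Finset α :=
  Finset.univ.filter (fun b => N a b)

noncomputable def frac [Fintype α] (N : α → α → Prop) (B : Finset α) (a : α) : ℝ :=
  ((nbhd N a ∩ B).card : ℝ) / ((nbhd N a).card : ℝ)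

/-- Postconditions of action-model states: `B`, `¬B`, or `⊤` (no change). -/
inductive Post where
  | B : Post
  | notB : Post
  | top : Post
deriving DecidableEq

/-- An action model over agents `α` with states `S`: a relation, and for each
state a precondition (given by its extension, a set of agents) and a
postcondition. -/
structure ActionModel (α : Type*) (S : Type*) where
  R : S → S → Prop
  pre : S → Finset α
  post : S → Post

/-- Membership of a product-update pair `(a,σ)` in the updated behavior set
`B↑`. -/
def BUp (E : ActionModel α S) (B : Finset α) (a : α) (σ : S) : Prop :=
  (a ∈ B ∧ E.post σ ≠ Post.notB) ∨ E.post σ = Post.B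

noncomputable def infl [Fintype α] (N : α → α → Prop) (θ : ℝ) (B : Finset α) : Finset α :=
  B ∪ Finset.univ.filter (fun a => θ ≤ frac N B a)

/-- The action model `E1`: state `0` has precondition `⟨≤⟩B` and postcondition
`B`; state `1` has precondition `¬⟨≤⟩B` and postcondition `⊤`; full relation. -/
noncomputable def E1 [Fintype α] (N : α → α → Prop) (θ : ℝ) (B : Finset α) :
    ActionModel α (Fin 2) where
  R := fun _ _ => True
  pre := fun σ =>
    if σ = 0 then Finset.univ.filter (fun a => θ ≤ frac N B a)
    else Finset.univ.filter (fun a => ¬ θ ≤ frac N B a)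
  post := fun σ => if σ = 0 then Post.B else Post.top

/-- product update with `E1` computes the inflating update rule:
`M ⊗ E1` is isomorphic to `(A, N, B⁺, θ)` with `B⁺ = infl N θ B`. -/
theorem E1_computes_inflating [Fintype α] (N : α → α → Prop)
    (hirr : ∀ a, ¬ N a a) (hsym : ∀ a b, N a b → N b a)
    (θ : ℝ) (hθ0 : 0 ≤ θ) (hθ1 : θ ≤ 1) (B : Finset α)
    (hnb : ∀ a, (nbhd N a).Nonempty) :
    ∃ f : α → {p : α × Fin 2 // p.1 ∈ (E1 N θ B).pre p.2},
      Function.Bijective f ∧ (∀ a, (f a).1.1 = a) ∧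
      (∀ a b, N a b ↔
        (N (f a).1.1 (f b).1.1 ∧ (E1 N θ B).R (f a).1.2 (f b).1.2)) ∧
      (∀ a, a ∈ infl N θ B ↔ BUp (E1 N θ B) B (f a).1.1 (f a).1.2) := by
  classical
  refine ⟨fun a => ⟨(a, if θ ≤ frac N B a then 0 else 1), ?_⟩, ?_, ?_, ?_, ?_⟩
  · by_cases h : θ ≤ frac N B a
    · simp [E1, h]
    · simp [E1, h, lt_of_not_ge h]
  · constructor
    · intro a b hab
      simpa using congrArg (fun p => p.1.1) hab
    · rintro ⟨⟨a, σ⟩, hpre⟩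
      refine ⟨a, ?_⟩
      have : σ = (if θ ≤ frac N B a then (0 : Fin 2) else 1) := by
        by_cases h : θ ≤ frac N B a
        · simp only [h, if_true]
          by_contra hσ
          have hσ1 : σ = 1 := by omega
          simp [E1, hσ1, h] at hpre
          linarith
        · simp only [h, if_false]
          by_contra hσ
          have hσ0 : σ = 0 := by omega
          simp [E1, hσ0, h] at hpre
      subst this
      rfl
  · intro a; rfl
  · intro a b; simp [E1]
  · intro a
    by_cases h : θ ≤ frac N B a <;>
      simp [infl, BUp, E1, h]
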